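/- Let I, J ∈ ℍ satisfy I² = −1, J² = −1 and IJ = −JI. Let q ∈ ℍ with ‖q‖ < 1 and q ∈ ℂ_I, and let α = α₁ + α₂·J with α₁, α₂ in the real span of {1, I}. Then G_q(α, α) = ‖α − qαq‖² / (‖1 − q²‖² · (1 − ‖q‖²)²) = ‖α₁‖² / (1 − ‖q‖²)² + ‖α₂‖² / ‖1 − q²‖². -/

import Mathlib

open Quaternion

lemma re_zero_of_sq {I : Quaternion ℝ} (hI : I^2 = -1) : I.re = 0 := by
  have h1 : (I*I).re = -1 := by rw [← sq, hI]; simp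
  have h2 : (I*I).imI = 0 := by rw [← sq, hI]; simp
  have h3 : (I*I).imJ = 0 := by rw [← sq, hI]; simp
  have h4 : (I*I).imK = 0 := by rw [← sq, hI]; simp
  simp [Quaternion.re_mul] at h1
  simp [Quaternion.imI_mul] at h2
  simp [Quaternion.imJ_mul] at h3
  simp [Quaternion.imK_mul] at h4
  nlinarith [sq_nonneg I.re, sq_nonneg I.imI, sq_nonneg I.imJ, sq_nonneg I.imK]

lemma star_eq_neg_of_sq {I : Quaternion ℝ} (hI : I^2 = -1) : star I = -I := by
  ext <;> simp [re_zero_of_sq hI]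

lemma span_comm {I : Quaternion ℝ} {x y : Quaternion ℝ}
    (hx : x ∈ Submodule.span ℝ ({1, I} : Set (Quaternion ℝ)))
    (hy : y ∈ Submodule.span ℝ ({1, I} : Set (Quaternion ℝ))) : x * y = y * x := by
  rw [Submodule.mem_span_pair] at hx hy
  obtain ⟨a, b, rfl⟩ := hx
  obtain ⟨c, d, rfl⟩ := hy
  simp only [add_mul, mul_add, smul_mul_assoc, mul_smul_comm, one_mul, mul_one, smul_smul]
  module

lemma span_mul_mem {I : Quaternion ℝ} (hI : I^2 = -1) {x y : Quaternion ℝ}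
    (hx : x ∈ Submodule.span ℝ ({1, I} : Set (Quaternion ℝ)))
    (hy : y ∈ Submodule.span ℝ ({1, I} : Set (Quaternion ℝ))) :
    x * y ∈ Submodule.span ℝ ({1, I} : Set (Quaternion ℝ)) := by
  have hII : I * I = -1 := by rw [← sq, hI]
  rw [Submodule.mem_span_pair] at hx hy ⊢
  obtain ⟨a, b, rfl⟩ := hx
  obtain ⟨c, d, rfl⟩ := hy
  refine ⟨a*c - b*d, a*d + b*c, ?_⟩
  simp only [add_mul, mul_add, smul_mul_assoc, mul_smul_comm, one_mul, mul_one, smul_smul, hII,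
    smul_neg]
  module

lemma span_star_mem {I : Quaternion ℝ} (hI : I^2 = -1) {x : Quaternion ℝ}
    (hx : x ∈ Submodule.span ℝ ({1, I} : Set (Quaternion ℝ))) :
    star x ∈ Submodule.span ℝ ({1, I} : Set (Quaternion ℝ)) := by
  rw [Submodule.mem_span_pair] at hx ⊢
  obtain ⟨a, b, rfl⟩ := hx
  refine ⟨a, -b, ?_⟩
  simp [Quaternion.star_smul, star_eq_neg_of_sq hI, smul_neg]

lemma span_J_comm {I J : Quaternion ℝ} (hI : I^2 = -1) (hIJ : I * J = -(J * I))
    {x : Quaternion ℝ}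
    (hx : x ∈ Submodule.span ℝ ({1, I} : Set (Quaternion ℝ))) : J * x = star x * J := by
  rw [Submodule.mem_span_pair] at hx
  obtain ⟨a, b, rfl⟩ := hx
  have hJI : J * I = -(I * J) := by rw [hIJ, neg_neg]
  simp only [star_add, Quaternion.star_smul, star_one, star_eq_neg_of_sq hI, mul_add, add_mul,
    mul_smul_comm, smul_mul_assoc, mul_one, one_mul, hJI, smul_neg, neg_mul]

lemma span_re_mul_J {I J : Quaternion ℝ} (hJ : J^2 = -1) (hIJ : I * J = -(J * I))
    {x : Quaternion ℝ}
    (hx : x ∈ Submodule.span ℝ ({1, I} : Set (Quaternion ℝ))) : (x * J).re = 0 := by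
  have hJre : J.re = 0 := re_zero_of_sq hJ
  have hIJre : (I * J).re = 0 := by
    have h : (I*J).re = (J*I).re := by simp [Quaternion.re_mul]; ring
    have h2 : (I*J).re = -(J*I).re := by rw [hIJ]; simp
    linarith
  rw [Submodule.mem_span_pair] at hx
  obtain ⟨a, b, rfl⟩ := hx
  simp [add_mul, smul_mul_assoc, hJre, hIJre]



/-- The slice Riemannian metric of the quaternionic unit ball. -/
noncomputable def sliceRiemannian (q α β : Quaternion ℝ) : ℝ :=
  ((α - q * α * q) * star (β - q * β * q)).re / (‖1 - q ^ 2‖ ^ 2 * (1 - ‖q‖ ^ 2) ^ 2)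

/-- for `q ∈ 𝔹 ∩ ℂ_I` and `α = α₁ + α₂J` with `α₁, α₂ ∈ ℂ_I`,
`G_q(α, α) = ‖α − qαq‖²/(‖1 − q²‖²(1 − ‖q‖²)²) = ‖α₁‖²/(1 − ‖q‖²)² + ‖α₂‖²/‖1 − q²‖²`,
i.e. the slice Riemannian metric coincides with the Arcozzi–Sarfatti metric. -/
theorem sliceRiemannian_eq_arcozziSarfatti (I J : Quaternion ℝ)
    (hI : I ^ 2 = -1) (hJ : J ^ 2 = -1) (hIJ : I * J = -(J * I))
    (q : Quaternion ℝ) (hqnorm : ‖q‖ < 1)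
    (hqI : q ∈ Submodule.span ℝ ({1, I} : Set (Quaternion ℝ)))
    (α₁ α₂ : Quaternion ℝ)
    (hα₁ : α₁ ∈ Submodule.span ℝ ({1, I} : Set (Quaternion ℝ)))
    (hα₂ : α₂ ∈ Submodule.span ℝ ({1, I} : Set (Quaternion ℝ)))
    (α : Quaternion ℝ) (hα : α = α₁ + α₂ * J) :
    sliceRiemannian q α α = ‖α - q * α * q‖ ^ 2 / (‖1 - q ^ 2‖ ^ 2 * (1 - ‖q‖ ^ 2) ^ 2) ∧
    sliceRiemannian q α α = ‖α₁‖ ^ 2 / (1 - ‖q‖ ^ 2) ^ 2 + ‖α₂‖ ^ 2 / ‖1 - q ^ 2‖ ^ 2 := by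
  have hre_self : ∀ x : Quaternion ℝ, (x * star x).re = ‖x‖ ^ 2 := by
    intro x
    rw [Quaternion.self_mul_star]
    simp [sq, Quaternion.normSq_eq_norm_mul_self]
  constructor
  · rw [sliceRiemannian, hre_self]
  -- abbreviations
  have hS : Submodule.span ℝ ({1, I} : Set (Quaternion ℝ)) = Submodule.span ℝ {1, I} := rfl
  have h1mem : (1 : Quaternion ℝ) ∈ Submodule.span ℝ ({1, I} : Set (Quaternion ℝ)) :=
    Submodule.subset_span (by simp)
  have hq2mem : q ^ 2 ∈ Submodule.span ℝ ({1, I} : Set (Quaternion ℝ)) := by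
    rw [sq]; exact span_mul_mem hI hqI hqI
  have hAmem : 1 - q ^ 2 ∈ Submodule.span ℝ ({1, I} : Set (Quaternion ℝ)) :=
    Submodule.sub_mem _ h1mem hq2mem
  set t : ℝ := 1 - ‖q‖ ^ 2 with ht
  have htpos : 0 < t := by
    have := norm_nonneg q
    nlinarith
  have hApos : (0:ℝ) < ‖1 - q ^ 2‖ := by
    rw [norm_pos_iff]
    intro h
    have : q ^ 2 = 1 := by rwa [sub_eq_zero, eq_comm] at h
    have h2 : ‖q ^ 2‖ = 1 := by rw [this, norm_one]
    rw [pow_two, norm_mul] at h2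
    nlinarith [norm_nonneg q]
  set u : Quaternion ℝ := (1 - q ^ 2) * α₁ with hu
  set v : Quaternion ℝ := t • α₂ with hv
  have humem : u ∈ Submodule.span ℝ ({1, I} : Set (Quaternion ℝ)) :=
    span_mul_mem hI hAmem hα₁
  have hvmem : v ∈ Submodule.span ℝ ({1, I} : Set (Quaternion ℝ)) :=
    Submodule.smul_mem _ _ hα₂
  -- key decomposition
  have key : α - q * α * q = u + v * J := by
    have h1 : q * α₁ * q = q ^ 2 * α₁ := by
      rw [span_comm hqI hα₁, mul_assoc, ← sq, span_comm hα₁ hq2mem]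
    have h2 : q * (α₂ * J) * q = (‖q‖ ^ 2 : ℝ) • (α₂ * J) := by
      calc q * (α₂ * J) * q = (q * α₂) * (J * q) := by noncomm_ring
        _ = (q * α₂) * (star q * J) := by rw [span_J_comm hI hIJ hqI]
        _ = (α₂ * (q * star q)) * J := by rw [span_comm hqI hα₂]; noncomm_ring
        _ = (α₂ * ((normSq q : ℝ) : Quaternion ℝ)) * J := by rw [Quaternion.self_mul_star]
        _ = (‖q‖ ^ 2 : ℝ) • (α₂ * J) := by
            rw [Quaternion.mul_coe_eq_smul, smul_mul_assoc, sq,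
              Quaternion.normSq_eq_norm_mul_self]
    rw [hα]
    rw [mul_add, add_mul, h1, h2, hu, hv]
    rw [sub_mul, one_mul, smul_mul_assoc, ht, sub_smul, one_smul]
    abel
  -- norm of the decomposition
  have hnorm : ((α - q * α * q) * star (α - q * α * q)).re = ‖u‖ ^ 2 + ‖v‖ ^ 2 := by
    rw [key]
    have hsvJ : star (v * J) = -(v * J) := by
      rw [star_mul, star_eq_neg_of_sq hJ, neg_mul,
        span_J_comm hI hIJ (span_star_mem hI hvmem), star_star]
    have hstar : star (u + v * J) = star u - v * J := by
      rw [star_add, hsvJ, ← sub_eq_add_neg]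
    rw [hstar]
    have hexp : (u + v * J) * (star u - v * J) =
        u * star u - (u * v) * J + (v * u) * J + v * star v := by
      have hJu : J * star u = u * J := by
        rw [span_J_comm hI hIJ (span_star_mem hI humem), star_star]
      have hJv : J * v = star v * J := span_J_comm hI hIJ hvmem
      have hJJ : J * J = -1 := by rw [← sq, hJ]
      calc (u + v * J) * (star u - v * J)
          = u * star u - (u * v) * J + v * (J * star u) - v * ((J * v) * J) := by
            noncomm_ring
        _ = u * star u - (u * v) * J + (v * u) * J - (v * star v) * (J * J) := by
            rw [hJu, hJv]; noncomm_ring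
        _ = u * star u - (u * v) * J + (v * u) * J + v * star v := by
            rw [hJJ]; noncomm_ring
    rw [hexp]
    have r1 : ((u * v) * J).re = 0 := span_re_mul_J hJ hIJ (span_mul_mem hI humem hvmem)
    have r2 : ((v * u) * J).re = 0 := span_re_mul_J hJ hIJ (span_mul_mem hI hvmem humem)
    simp only [Quaternion.re_add, Quaternion.re_sub, r1, r2, hre_self]
    ring
  have hnu : ‖u‖ = ‖1 - q ^ 2‖ * ‖α₁‖ := norm_mul _ _
  have hnv : ‖v‖ = t * ‖α₂‖ := by
    rw [hv, norm_smul, Real.norm_eq_abs, abs_of_pos htpos]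
  rw [sliceRiemannian, hnorm, hnu, hnv]
  rw [← ht]
  field_simp
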